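/- arXiv:1511.03100 — 2 statements merged into one kernel-verified Lean document; each statement's English description precedes it below -/
import Mathlib

section
/- Let G be a connected bipartite distance-hereditary graph and let e = xy be a cut-edge of G. Then e is a bisimplicial edge of the pivot graph G^{e}. -/
open SimpleGraph

variable {α β : Type*}

/-- `G` contains an induced copy of `H`. -/
def HasInducedCopy (H : SimpleGraph β) (G : SimpleGraph α) : Prop :=
  ∃ f : β ↪ α, ∀ a b, G.Adj (f a) (f b) ↔ H.Adj a b

/-- The graph `2K₂`: two disjoint edges on four vertices. -/
def twoK2Graph : SimpleGraph (Fin 4) :=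
  SimpleGraph.fromEdgeSet {s(0, 1), s(2, 3)}

/-- The domino: a 6-cycle together with a chord joining two antipodal vertices. -/
def dominoGraph : SimpleGraph (Fin 6) :=
  SimpleGraph.fromEdgeSet {s(0, 1), s(1, 2), s(2, 3), s(3, 4), s(4, 5), s(5, 0), s(0, 3)}

/-- The arrow: a 4-cycle with two pendant vertices attached to two vertices of
the same color class. -/
def arrowGraph : SimpleGraph (Fin 6) :=
  SimpleGraph.fromEdgeSet {s(0, 1), s(1, 2), s(2, 3), s(3, 0), s(0, 4), s(2, 5)}

/-- `T₂`: the subdivision of the claw `K_{1,3}` obtained by inserting one new vertex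
into each edge. -/
def t2Graph : SimpleGraph (Fin 7) :=
  SimpleGraph.fromEdgeSet {s(0, 1), s(0, 2), s(0, 3), s(1, 4), s(2, 5), s(3, 6)}

/-- `G` has a hole: an induced chordless cycle of length at least 6. -/
def HasHole (G : SimpleGraph α) : Prop :=
  ∃ n, 6 ≤ n ∧ HasInducedCopy (SimpleGraph.cycleGraph n) G

/-- Bipartite distance-hereditary graph, via the forbidden induced subgraph
characterization: connected, bipartite, with no induced hole and no induced domino. -/
def IsBDH (G : SimpleGraph α) : Prop :=
  G.Connected ∧ G.Colorable 2 ∧ ¬ HasHole G ∧ ¬ HasInducedCopy dominoGraph G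

/-- The pivot `G^{uv}` of a graph on the pair `u v`: complement all edges between
`N(u) \ {v}` and `N(v) \ {u}`. -/
def gpivot (G : SimpleGraph α) (u v : α) : SimpleGraph α where
  Adj a b := a ≠ b ∧ Xor' (G.Adj a b)
    ((G.Adj u a ∧ a ≠ v ∧ G.Adj v b ∧ b ≠ u) ∨ (G.Adj u b ∧ b ≠ v ∧ G.Adj v a ∧ a ≠ u))
  symm := by
    constructor
    intro a b h
    refine ⟨h.1.symm, ?_⟩
    have hx := h.2
    rw [G.adj_comm b a, or_comm]
    exact hx
  loopless := ⟨fun a h => h.1 rfl⟩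

/-- `A`, `B` are the color classes of a bipartition of `G`. -/
def IsBipartitionWith (G : SimpleGraph α) (A B : Set α) : Prop :=
  (∀ v, v ∈ A ∨ v ∈ B) ∧ (∀ v, ¬ (v ∈ A ∧ v ∈ B)) ∧
    ∀ ⦃x y⦄, G.Adj x y → (x ∈ A ∧ y ∈ B) ∨ (x ∈ B ∧ y ∈ A)

/-- The neighborhoods of any two distinct vertices of `S` are comparable under inclusion. -/
def ChainOn (G : SimpleGraph α) (S : Set α) : Prop :=
  ∀ u ∈ S, ∀ u' ∈ S, u ≠ u' →
    G.neighborSet u ⊆ G.neighborSet u' ∨ G.neighborSet u' ⊆ G.neighborSet u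

/-- An edge `uv` is bisimplicial: `N(u) ∪ N(v)` induces a complete bipartite subgraph. -/
def Bisimplicial (G : SimpleGraph α) (u v : α) : Prop :=
  G.Adj u v ∧ ∀ a b, G.Adj v a → G.Adj u b → a ≠ b → G.Adj a b

/-- A pending edge: an edge one of whose endpoints has degree one. -/
def PendingEdge (G : SimpleGraph α) (u v : α) : Prop :=
  G.Adj u v ∧ ((∃! w, G.Adj u w) ∨ (∃! w, G.Adj v w))

/-- A proper bisimplicial edge: bisimplicial and not pending. -/
def ProperBisimplicial (G : SimpleGraph α) (u v : α) : Prop :=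
  Bisimplicial G u v ∧ ¬ PendingEdge G u v

/-- `G` is distance hereditary: every connected induced subgraph inherits distances. -/
def DistHereditary (G : SimpleGraph α) : Prop :=
  ∀ U : Set α, (G.induce U).Connected →
    ∀ u v : U, (G.induce U).dist u v = G.dist (u : α) (v : α)

/-- `G` can be built by the Bandelt–Mulder construction: there is an ordering of its
vertices such that every vertex apart from the first one is, at the time of its insertion,
either a pending vertex (exactly one earlier neighbor) or a twin of an earlier vertex
(same earlier neighbors as that vertex). -/
def BMConstructible (G : SimpleGraph α) : Prop :=
  ∃ (n : ℕ) (e : Fin n ≃ α), ∀ i : Fin n, 0 < (i : ℕ) →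
    (∃! w, (∃ j : Fin n, (j : ℕ) < (i : ℕ) ∧ e j = w) ∧ G.Adj (e i) w) ∨
    (∃ j : Fin n, (j : ℕ) < (i : ℕ) ∧
      ∀ x, (∃ k : Fin n, (k : ℕ) < (i : ℕ) ∧ e k = x) → (G.Adj (e i) x ↔ G.Adj (e j) x))

/-- One pivot step: `H` is obtained from `G` by pivoting on an edge of `G`. -/
def PivotStep (G H : SimpleGraph α) : Prop := ∃ u v, G.Adj u v ∧ H = gpivot G u v

/-- `H` belongs to the pivot-orbit of `G`. -/
def InPivotOrbit (G H : SimpleGraph α) : Prop := Relation.ReflTransGen PivotStep G H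

/-- A balanced bipartite graph: every induced cycle of length at least 6 has length
divisible by 4. -/
def BalancedGraph (G : SimpleGraph α) : Prop :=
  ∀ n, 6 ≤ n → HasInducedCopy (SimpleGraph.cycleGraph n) G → n % 4 = 0

/-- `H` is a minor of `G`, via branch sets. -/
def HasMinor (G : SimpleGraph α) (H : SimpleGraph β) : Prop :=
  ∃ B : β → Set α, (∀ w, (B w).Nonempty) ∧ (∀ w, (G.induce (B w)).Connected) ∧
    (∀ w w', w ≠ w' → Disjoint (B w) (B w')) ∧
    ∀ w w', H.Adj w w' → ∃ a ∈ B w, ∃ b ∈ B w', G.Adj a b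

/-- Outer-planar graph, via the forbidden minor characterization: no `K₄` minor and
no `K_{2,3}` minor. -/
def OuterplanarGraph (G : SimpleGraph α) : Prop :=
  ¬ HasMinor G (completeGraph (Fin 4)) ∧
  ¬ HasMinor G (completeBipartiteGraph (Fin 2) (Fin 3))

/-- `G` is 2-connected: connected and still connected after deleting any one vertex. -/
def TwoConnected (G : SimpleGraph α) : Prop :=
  G.Connected ∧ ∀ v : α, ((⊤ : G.Subgraph).deleteVerts {v}).coe.Connected

/-- `G` is a path graph: a tree in which every vertex has at most two neighbors. -/
def IsPathGraph (G : SimpleGraph α) : Prop :=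
  G.IsTree ∧ ∀ v a b c : α, G.Adj v a → G.Adj v b → G.Adj v c → a = b ∨ a = c ∨ b = c

/-- An abstract plane embedding of a graph `H`: a type of faces with a distinguished
outer face, where each edge borders a pair of distinct faces, and every face is
bordered by some edge. -/
structure PlaneEmbedding (H : SimpleGraph α) where
  F : Type
  outer : F
  border : Sym2 α → Sym2 F
  border_ne : ∀ e ∈ H.edgeSet, ¬ (border e).IsDiag
  face_mem : ∀ f : F, ∃ e ∈ H.edgeSet, f ∈ border e

/-- The plane dual graph of an embedding: faces are adjacent when they share an edge. -/
def PlaneEmbedding.dualGraph {H : SimpleGraph α} (P : PlaneEmbedding H) : SimpleGraph P.F :=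
  SimpleGraph.fromEdgeSet (P.border '' H.edgeSet)

/-- The weak dual: the subgraph of the dual induced by the bounded (non-outer) faces. -/
def PlaneEmbedding.weakDual {H : SimpleGraph α} (P : PlaneEmbedding H) :=
  P.dualGraph.induce {f | f ≠ P.outer}

/-- Vertex `x` lies on face `f` of the embedding. -/
def PlaneEmbedding.OnFace {H : SimpleGraph α} (P : PlaneEmbedding H) (x : α) (f : P.F) : Prop :=
  ∃ w, H.Adj x w ∧ f ∈ P.border s(x, w)

/-- `S` is the arc set of a directed path inside the arc set `D`. -/
def IsDirectedPathSet {W : Type*} (D S : Set (W × W)) : Prop :=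
  S ⊆ D ∧ ∃ (k : ℕ) (w : Fin (k + 1) → W), Function.Injective w ∧
    S = {p | ∃ i : Fin k, p = (w i.castSucc, w i.succ)}

lemma cut_lemma {α : Type*} (G : SimpleGraph α) (hconn : G.Connected) {x y a b : α} (hxy : G.Adj x y)
    (hya : G.Adj y a) (hxb : G.Adj x b) (hab : G.Adj a b)
    (hax : a ≠ x) (hby : b ≠ y) : (G.deleteEdges {s(x, y)}).Connected := by
  set G' := G.deleteEdges {s(x, y)} with hG'
  have hne : ∀ u v : α, u ≠ x ∨ v ≠ y → u ≠ y ∨ v ≠ x → s(u, v) ∉ ({s(x, y)} : Set (Sym2 α)) := by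
    intro u v h1 h2 hmem
    simp only [Set.mem_singleton_iff, Sym2.eq, Sym2.rel_iff', Prod.mk.injEq, Prod.swap_prod_mk] at hmem
    rcases hmem with ⟨rfl, rfl⟩ | ⟨rfl, rfl⟩
    · rcases h1 with h | h <;> exact h rfl
    · rcases h2 with h | h <;> exact h rfl
  have h1 : G'.Adj x b := SimpleGraph.deleteEdges_adj.mpr ⟨hxb, hne x b (Or.inr hby) (Or.inl hxy.ne)⟩
  have h2 : G'.Adj y a := SimpleGraph.deleteEdges_adj.mpr ⟨hya, hne y a (Or.inr hya.ne') (Or.inr hax)⟩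
  have h3 : G'.Adj a b := SimpleGraph.deleteEdges_adj.mpr ⟨hab, hne a b (Or.inl hax) (Or.inl hya.ne')⟩
  have hreach : G'.Reachable x y :=
    (h1.reachable.trans h3.symm.reachable).trans h2.symm.reachable
  have step : ∀ u v : α, G.Adj u v → G'.Reachable u v := by
    intro u v huv
    by_cases h : s(u, v) ∈ ({s(x, y)} : Set (Sym2 α))
    · simp only [Set.mem_singleton_iff, Sym2.eq, Sym2.rel_iff', Prod.mk.injEq,
        Prod.swap_prod_mk] at h
      rcases h with ⟨rfl, rfl⟩ | ⟨rfl, rfl⟩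
      · exact hreach
      · exact hreach.symm
    · exact SimpleGraph.Adj.reachable (SimpleGraph.deleteEdges_adj.mpr ⟨huv, h⟩)
  have key : ∀ u v : α, G.Reachable u v → G'.Reachable u v := by
    intro u v h
    rw [SimpleGraph.reachable_iff_reflTransGen] at h
    induction h with
    | refl => exact SimpleGraph.Reachable.refl _
    | tail _ hstep ih => exact ih.trans (step _ _ hstep)
  haveI := hconn.nonempty
  exact SimpleGraph.Connected.mk (fun u v => key u v (hconn.preconnected u v))

theorem stmt11 {α : Type*} (G : SimpleGraph α) (hG : IsBDH G) (x y : α)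
    (hxy : G.Adj x y) (hcut : ¬ (G.deleteEdges {s(x, y)}).Connected) :
    Bisimplicial (gpivot G x y) x y := by
  refine ⟨⟨hxy.ne, Or.inl ⟨hxy, ?_⟩⟩, ?_⟩
  · rintro (⟨h, -⟩ | ⟨-, h, -⟩)
    · exact G.irrefl h
    · exact h rfl
  · intro a b hya hxb hab
    have hya' : G.Adj y a := by
      rcases hya.2 with ⟨h, -⟩ | ⟨(⟨-, h, -⟩ | ⟨-, -, h, -⟩), -⟩
      · exact h
      · exact absurd rfl h
      · exact absurd h (G.irrefl)
    have hxb' : G.Adj x b := by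
      rcases hxb.2 with ⟨h, -⟩ | ⟨(⟨h, -⟩ | ⟨-, -, -, h⟩), -⟩
      · exact h
      · exact absurd h (G.irrefl)
      · exact absurd rfl h
    by_cases hax : a = x
    · subst hax; exact hxb
    by_cases hby : b = y
    · subst hby; exact hya.symm
    have hnab : ¬ G.Adj a b := fun h =>
      hcut (cut_lemma G hG.1 hxy hya' hxb' h hax hby)
    exact ⟨hab, Or.inr ⟨Or.inr ⟨hxb', hby, hya', hax⟩, hnab⟩⟩
end

section
/- Let G be a bipartite graph such that every graph in the pivot-orbit of G is balanced, meaning every induced cycle of length ≥ 6 has length divisible by 4. Then G has no induced hole at all; that is, G is chordal bipartite. -/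
open SimpleGraph

variable {α β : Type*}

private lemma mod_one_iff {n x : ℕ} (hn : 2 ≤ n) (hx : x < 2 * n) :
    x % n = 1 ↔ (x = 1 ∨ x = n + 1) := by
  rcases Nat.lt_or_ge x n with h | h
  · rw [Nat.mod_eq_of_lt h]; omega
  · rw [Nat.mod_eq_sub_mod h, Nat.mod_eq_of_lt (by omega)]; omega

private lemma cyc_adj {n : ℕ} (hn : 2 ≤ n) (a b : Fin n) :
    (cycleGraph n).Adj a b ↔
      (a.val + 1 = b.val ∨ b.val + 1 = a.val ∨ (a.val = 0 ∧ b.val + 1 = n) ∨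
        (b.val = 0 ∧ a.val + 1 = n)) := by
  have ha := a.isLt
  have hb := b.isLt
  rw [cycleGraph_adj']
  rw [Fin.sub_def, Fin.sub_def]
  simp only [Fin.val_mk]
  rw [mod_one_iff hn (by omega), mod_one_iff hn (by omega)]
  omega

private lemma gpivot_adj_iff (G : SimpleGraph α) (u v a b : α) :
    (gpivot G u v).Adj a b ↔ a ≠ b ∧ Xor' (G.Adj a b)
      ((G.Adj u a ∧ a ≠ v ∧ G.Adj v b ∧ b ≠ u) ∨
        (G.Adj u b ∧ b ≠ v ∧ G.Adj v a ∧ a ≠ u)) := Iff.rfl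

set_option maxHeartbeats 8000000 in
theorem stmt14 {α : Type*} (G : SimpleGraph α) (hbip : G.Colorable 2)
    (hbal : ∀ H, InPivotOrbit G H → BalancedGraph H) :
    ¬ HasHole G := by
  rintro ⟨n, hn6, f, hf⟩
  have h0 : n % 4 = 0 := hbal G Relation.ReflTransGen.refl n hn6 ⟨f, hf⟩
  have hn8 : 8 ≤ n := by omega
  have hn2 : 2 ≤ n := by omega
  have hn2' : 2 ≤ n - 2 := by omega
  set u : α := f ⟨0, by omega⟩ with hu
  set v : α := f ⟨1, by omega⟩ with hv
  have huv : G.Adj u v := by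
    rw [hf, cyc_adj hn2]
    simp
  set H := gpivot G u v with hH
  have horb : InPivotOrbit G H := Relation.ReflTransGen.single ⟨u, v, huv, rfl⟩
  -- the shifted embedding into the pivoted graph
  have hle : ∀ i : Fin (n - 2), i.val + 2 < n := fun i => by have := i.isLt; omega
  set g : Fin (n - 2) ↪ α :=
    ⟨fun i => f ⟨i.val + 2, hle i⟩, by
      intro i j hij
      have := f.injective hij
      rw [Fin.ext_iff] at this ⊢
      simpa using this⟩ with hg
  have hcopy : HasInducedCopy (SimpleGraph.cycleGraph (n - 2)) H := by
    refine ⟨g, fun a b => ?_⟩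
    have ha := a.isLt
    have hb := b.isLt
    have hn0 : (0:ℕ) < n := by omega
    have hn1 : (1:ℕ) < n := by omega
    have e1 : G.Adj (f ⟨0, hn0⟩) (f ⟨a.val + 2, hle a⟩) ↔ a.val + 2 + 1 = n := by
      rw [hf, cyc_adj hn2]; simp only [Fin.val_mk, true_and, and_true, false_and, and_false, or_true, true_or, or_false, false_or]; omega
    have e1' : G.Adj (f ⟨0, hn0⟩) (f ⟨b.val + 2, hle b⟩) ↔ b.val + 2 + 1 = n := by
      rw [hf, cyc_adj hn2]; simp only [Fin.val_mk, true_and, and_true, false_and, and_false, or_true, true_or, or_false, false_or]; omega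
    have e2 : G.Adj (f ⟨1, hn1⟩) (f ⟨a.val + 2, hle a⟩) ↔ a.val = 0 := by
      rw [hf, cyc_adj hn2]; simp only [Fin.val_mk, true_and, and_true, false_and, and_false, or_true, true_or, or_false, false_or]; omega
    have e2' : G.Adj (f ⟨1, hn1⟩) (f ⟨b.val + 2, hle b⟩) ↔ b.val = 0 := by
      rw [hf, cyc_adj hn2]; simp only [Fin.val_mk, true_and, and_true, false_and, and_false, or_true, true_or, or_false, false_or]; omega
    have e3 : G.Adj (f ⟨a.val + 2, hle a⟩) (f ⟨b.val + 2, hle b⟩) ↔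
        (a.val + 1 = b.val ∨ b.val + 1 = a.val) := by
      rw [hf, cyc_adj hn2]; simp only [Fin.val_mk, true_and, and_true, false_and, and_false, or_true, true_or, or_false, false_or]; omega
    have q1 : f ⟨a.val + 2, hle a⟩ = f ⟨0, hn0⟩ ↔ False := by
      simp only [EmbeddingLike.apply_eq_iff_eq, Fin.ext_iff, Fin.val_mk, iff_false]; omega
    have q1' : f ⟨b.val + 2, hle b⟩ = f ⟨0, hn0⟩ ↔ False := by
      simp only [EmbeddingLike.apply_eq_iff_eq, Fin.ext_iff, Fin.val_mk, iff_false]; omega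
    have q2 : f ⟨a.val + 2, hle a⟩ = f ⟨1, hn1⟩ ↔ False := by
      simp only [EmbeddingLike.apply_eq_iff_eq, Fin.ext_iff, Fin.val_mk, iff_false]; omega
    have q2' : f ⟨b.val + 2, hle b⟩ = f ⟨1, hn1⟩ ↔ False := by
      simp only [EmbeddingLike.apply_eq_iff_eq, Fin.ext_iff, Fin.val_mk, iff_false]; omega
    have q3 : f ⟨a.val + 2, hle a⟩ = f ⟨b.val + 2, hle b⟩ ↔ a.val = b.val := by
      simp only [EmbeddingLike.apply_eq_iff_eq, Fin.ext_iff, Fin.val_mk]; omega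
    show (gpivot G (f ⟨0, hn0⟩) (f ⟨1, hn1⟩)).Adj
        (f ⟨a.val + 2, hle a⟩) (f ⟨b.val + 2, hle b⟩) ↔ (SimpleGraph.cycleGraph (n - 2)).Adj a b
    rw [gpivot_adj_iff, cyc_adj hn2']
    simp only [Xor', xor_def, ne_eq, e1, e1', e2, e2', e3, q1, q1', q2, q2', q3,
      not_false_iff, not_true, true_and, and_true, false_and, and_false,
      or_true, true_or, or_false, false_or, iff_false, iff_true]
    omega
  have h2 : (n - 2) % 4 = 0 := hbal H horb (n - 2) (by omega) hcopy
  omega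
end
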